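/- There exists a constant C such that for all x ∈ ℝ³ and all ρ with 1 < ρ ≤ 2|x|/3, ∫_{|y|=ρ} e^{−|x−y|−|y|} sin²ζ(x,y) dτ_y ≤ C e^{−|x|}, where ζ(x,y) is the angle between x and y. -/

import Mathlib

set_option autoImplicit false
set_option maxHeartbeats 800000
open MeasureTheory InnerProductGeometry Real
open scoped ENNReal NNReal RealInnerProductSpace

noncomputable section
namespace Stmt15Aux

abbrev E3 := EuclideanSpace ℝ (Fin 3)

lemma restrict_le_smul_map {Φ : (Fin 2 → ℝ) → E3} {D : Set (Fin 2 → ℝ)} {L : NNReal}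
    (hΦ : LipschitzOnWith L Φ D) (hD : MeasurableSet D) (hΦm : Measurable Φ)
    {T : Set E3} (hT : T ⊆ Φ '' D) :
    (μH[2] : Measure E3).restrict T ≤ ((L : ENNReal) ^ (2:ℝ)) • Measure.map Φ (volume.restrict D) := by
  rw [Measure.le_iff]
  intro s hs
  rw [Measure.restrict_apply hs, Measure.smul_apply, smul_eq_mul,
    Measure.map_apply hΦm hs, Measure.restrict_apply (hΦm hs)]
  calc μH[2] (s ∩ T) ≤ μH[2] (Φ '' (Φ ⁻¹' s ∩ D)) := by
        apply measure_mono
        rintro y ⟨hys, hyT⟩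
        obtain ⟨p, hpD, rfl⟩ := hT hyT
        exact ⟨p, ⟨hys, hpD⟩, rfl⟩
    _ ≤ (L : ENNReal) ^ (2:ℝ) * μH[2] (Φ ⁻¹' s ∩ D) :=
        (hΦ.mono Set.inter_subset_right).hausdorffMeasure_image_le (by norm_num)
    _ = (L : ENNReal) ^ (2:ℝ) * volume (Φ ⁻¹' s ∩ D) := by
        congr 1
        have h2 : ((2:ℝ)) = ((Fintype.card (Fin 2) : ℝ)) := by simp
        rw [h2, hausdorffMeasure_pi_real]


lemma lint_gauss {c : ℝ} (hc : 0 < c) :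
    ∫⁻ t : ℝ, ENNReal.ofReal (Real.exp (-c * t ^ 2)) = ENNReal.ofReal (Real.sqrt (π / c)) := by
  rw [← ofReal_integral_eq_lintegral_ofReal (integrable_exp_neg_mul_sq hc)
    (Filter.Eventually.of_forall fun t => (Real.exp_pos _).le), integral_gaussian]

lemma key_pt {c t : ℝ} (hc : 0 < c) :
    t ^ 2 * Real.exp (-(2*c) * t ^ 2) ≤ c⁻¹ * Real.exp (-c * t ^ 2) := by
  have hz : c * t ^ 2 ≤ Real.exp (c * t ^ 2) := by
    linarith [Real.add_one_le_exp (c * t ^ 2)]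
  have h2 : t ^ 2 ≤ c⁻¹ * Real.exp (c * t ^ 2) := by
    rw [← mul_le_mul_iff_right₀ hc, ← mul_assoc, mul_inv_cancel₀ hc.ne', one_mul]; exact hz
  have he : Real.exp (-(2*c) * t ^ 2)
      = (Real.exp (c * t ^ 2))⁻¹ * Real.exp (-c * t ^ 2) := by
    rw [← Real.exp_neg, ← Real.exp_add]; ring_nf
  rw [he, ← mul_assoc]
  apply mul_le_mul_of_nonneg_right _ (Real.exp_pos _).le
  have hE := Real.exp_pos (c * t ^ 2)
  have := mul_le_mul_of_nonneg_right h2 (inv_nonneg.mpr hE.le)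
  rwa [mul_assoc, mul_inv_cancel₀ hE.ne', mul_one] at this

lemma lint_moment {c : ℝ} (hc : 0 < c) :
    ∫⁻ t : ℝ, ENNReal.ofReal (t ^ 2 * Real.exp (-(2*c) * t ^ 2))
      ≤ ENNReal.ofReal (c⁻¹ * Real.sqrt (π / c)) := by
  calc ∫⁻ t : ℝ, ENNReal.ofReal (t ^ 2 * Real.exp (-(2*c) * t ^ 2))
      ≤ ∫⁻ t : ℝ, ENNReal.ofReal (c⁻¹ * Real.exp (-c * t ^ 2)) :=
        lintegral_mono fun t => ENNReal.ofReal_le_ofReal (key_pt hc)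
    _ = ∫⁻ t : ℝ, ENNReal.ofReal c⁻¹ * ENNReal.ofReal (Real.exp (-c * t ^ 2)) := by
        congr 1; ext t; rw [ENNReal.ofReal_mul (by positivity)]
    _ = ENNReal.ofReal c⁻¹ * ENNReal.ofReal (Real.sqrt (π / c)) := by
        rw [lintegral_const_mul' _ _ ENNReal.ofReal_ne_top, lint_gauss hc]
    _ = ENNReal.ofReal (c⁻¹ * Real.sqrt (π / c)) := by
        rw [← ENNReal.ofReal_mul (by positivity)]

lemma lint_2d {ρ : ℝ} (hρ : 0 < ρ) :
    ∫⁻ p : Fin 2 → ℝ, ENNReal.ofReal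
        ((p 0 ^ 2 + p 1 ^ 2) * Real.exp (-(2 * (4*ρ)⁻¹) * (p 0 ^ 2 + p 1 ^ 2)))
      ≤ ENNReal.ofReal (96 * ρ ^ 2) := by
  set c : ℝ := (4*ρ)⁻¹ with hcdef
  have hc : 0 < c := by positivity
  set A : ℝ → ℝ≥0∞ := fun t => ENNReal.ofReal (t ^ 2 * Real.exp (-(2*c) * t ^ 2)) with hA
  set B : ℝ → ℝ≥0∞ := fun t => ENNReal.ofReal (Real.exp (-(2*c) * t ^ 2)) with hB
  have hAm : Measurable A := by
    apply Measurable.ennreal_ofReal; fun_prop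
  have hBm : Measurable B := by
    apply Measurable.ennreal_ofReal; fun_prop
  have hsplit : ∀ p : Fin 2 → ℝ, ENNReal.ofReal
      ((p 0 ^ 2 + p 1 ^ 2) * Real.exp (-(2*c) * (p 0 ^ 2 + p 1 ^ 2)))
      = A (p 0) * B (p 1) + B (p 0) * A (p 1) := by
    intro p
    have hE : Real.exp (-(2*c) * (p 0 ^ 2 + p 1 ^ 2))
        = Real.exp (-(2*c) * p 0 ^ 2) * Real.exp (-(2*c) * p 1 ^ 2) := by
      rw [← Real.exp_add]; ring_nf
    rw [hA, hB]
    simp only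
    rw [← ENNReal.ofReal_mul (by positivity), ← ENNReal.ofReal_mul (by positivity),
      ← ENNReal.ofReal_add (by positivity) (by positivity)]
    congr 1
    rw [hE]; ring
  -- rewrite integrand
  have : (∫⁻ p : Fin 2 → ℝ, ENNReal.ofReal
        ((p 0 ^ 2 + p 1 ^ 2) * Real.exp (-(2*c) * (p 0 ^ 2 + p 1 ^ 2))))
      = (∫⁻ p : Fin 2 → ℝ, A (p 0) * B (p 1)) + ∫⁻ p : Fin 2 → ℝ, B (p 0) * A (p 1) := by
    rw [← lintegral_add_left]
    · exact lintegral_congr hsplit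
    · exact (hAm.comp (measurable_pi_apply 0)).mul (hBm.comp (measurable_pi_apply 1))
  rw [this]
  -- transfer to ℝ × ℝ
  have hmp := MeasureTheory.volume_preserving_finTwoArrow ℝ
  have hAB : (∫⁻ p : Fin 2 → ℝ, A (p 0) * B (p 1))
      = (∫⁻ t : ℝ, A t) * ∫⁻ t : ℝ, B t := by
    have := hmp.lintegral_comp (f := fun q : ℝ × ℝ => A q.1 * B q.2)
      ((hAm.comp measurable_fst).mul (hBm.comp measurable_snd))
    calc (∫⁻ p : Fin 2 → ℝ, A (p 0) * B (p 1))
        = ∫⁻ p : Fin 2 → ℝ, (fun q : ℝ × ℝ => A q.1 * B q.2) (MeasurableEquiv.finTwoArrow p) := by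
          rfl
      _ = ∫⁻ q : ℝ × ℝ, A q.1 * B q.2 := this
      _ = (∫⁻ t : ℝ, A t) * ∫⁻ t : ℝ, B t := by
          rw [MeasureTheory.Measure.volume_eq_prod]
          exact lintegral_prod_mul hAm.aemeasurable hBm.aemeasurable
  have hBA : (∫⁻ p : Fin 2 → ℝ, B (p 0) * A (p 1))
      = (∫⁻ t : ℝ, B t) * ∫⁻ t : ℝ, A t := by
    have := hmp.lintegral_comp (f := fun q : ℝ × ℝ => B q.1 * A q.2)
      ((hBm.comp measurable_fst).mul (hAm.comp measurable_snd))
    calc (∫⁻ p : Fin 2 → ℝ, B (p 0) * A (p 1))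
        = ∫⁻ p : Fin 2 → ℝ, (fun q : ℝ × ℝ => B q.1 * A q.2) (MeasurableEquiv.finTwoArrow p) := by
          rfl
      _ = ∫⁻ q : ℝ × ℝ, B q.1 * A q.2 := this
      _ = (∫⁻ t : ℝ, B t) * ∫⁻ t : ℝ, A t := by
          rw [MeasureTheory.Measure.volume_eq_prod]
          exact lintegral_prod_mul hBm.aemeasurable hAm.aemeasurable
  rw [hAB, hBA]
  -- numeric bounds
  have hπc : π / c = 4 * π * ρ := by rw [hcdef]; field_simp
  have hsq1 : Real.sqrt (π / c) ≤ 4 * Real.sqrt ρ := by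
    rw [hπc]
    have : 4 * π * ρ ≤ 16 * ρ := by nlinarith [Real.pi_le_four, hρ.le]
    calc Real.sqrt (4 * π * ρ) ≤ Real.sqrt (16 * ρ) := Real.sqrt_le_sqrt this
      _ = 4 * Real.sqrt ρ := by
          rw [show (16:ℝ) * ρ = 4^2 * ρ by norm_num, Real.sqrt_mul (by positivity),
            Real.sqrt_sq (by norm_num)]
  have hAle : (∫⁻ t : ℝ, A t) ≤ ENNReal.ofReal (16 * ρ * Real.sqrt ρ) := by
    refine le_trans (lint_moment hc) (ENNReal.ofReal_le_ofReal ?_)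
    have hcinv : c⁻¹ = 4 * ρ := by rw [hcdef, inv_inv]
    rw [hcinv]
    calc 4 * ρ * Real.sqrt (π / c) ≤ 4 * ρ * (4 * Real.sqrt ρ) := by
          apply mul_le_mul_of_nonneg_left hsq1 (by positivity)
      _ = 16 * ρ * Real.sqrt ρ := by ring
  have hBle : (∫⁻ t : ℝ, B t) ≤ ENNReal.ofReal (3 * Real.sqrt ρ) := by
    rw [hB]
    have h2c : (0:ℝ) < 2 * c := by positivity
    rw [show (fun t : ℝ => ENNReal.ofReal (Real.exp (-(2*c) * t ^ 2)))
      = fun t : ℝ => ENNReal.ofReal (Real.exp (-(2*c) * t ^ 2)) from rfl]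
    rw [lint_gauss h2c]
    apply ENNReal.ofReal_le_ofReal
    have hπ2c : π / (2*c) = 2 * π * ρ := by rw [hcdef]; field_simp; ring
    rw [hπ2c]
    have : 2 * π * ρ ≤ 9 * ρ := by nlinarith [Real.pi_le_four, hρ.le]
    calc Real.sqrt (2 * π * ρ) ≤ Real.sqrt (9 * ρ) := Real.sqrt_le_sqrt this
      _ = 3 * Real.sqrt ρ := by
          rw [show (9:ℝ) * ρ = 3^2 * ρ by norm_num, Real.sqrt_mul (by positivity),
            Real.sqrt_sq (by norm_num)]
  have hprod : (∫⁻ t : ℝ, A t) * (∫⁻ t : ℝ, B t) ≤ ENNReal.ofReal (48 * ρ ^ 2) := by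
    calc (∫⁻ t : ℝ, A t) * (∫⁻ t : ℝ, B t)
        ≤ ENNReal.ofReal (16 * ρ * Real.sqrt ρ) * ENNReal.ofReal (3 * Real.sqrt ρ) :=
          mul_le_mul' hAle hBle
      _ = ENNReal.ofReal ((16 * ρ * Real.sqrt ρ) * (3 * Real.sqrt ρ)) :=
          (ENNReal.ofReal_mul (by positivity)).symm
      _ = ENNReal.ofReal (48 * ρ * (Real.sqrt ρ * Real.sqrt ρ)) := by ring_nf
      _ = ENNReal.ofReal (48 * ρ ^ 2) := by
          rw [Real.mul_self_sqrt hρ.le]; ring_nf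
  calc (∫⁻ t : ℝ, A t) * (∫⁻ t : ℝ, B t) + (∫⁻ t : ℝ, B t) * (∫⁻ t : ℝ, A t)
      ≤ ENNReal.ofReal (48 * ρ ^ 2) + ENNReal.ofReal (48 * ρ ^ 2) := by
        exact add_le_add hprod (by rwa [mul_comm])
    _ = ENNReal.ofReal (96 * ρ ^ 2) := by
        rw [← ENNReal.ofReal_add (by positivity) (by positivity)]; congr 1; ring


lemma abs_sin_le_abs (t : ℝ) : |Real.sin t| ≤ |t| := by
  have key : ∀ s : ℝ, 0 ≤ s → |Real.sin s| ≤ |s| := by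
    intro s hs
    rw [abs_of_nonneg hs, abs_le]
    constructor
    · by_cases h1 : s ≤ π
      · have := Real.sin_nonneg_of_nonneg_of_le_pi hs h1; linarith
      · have := Real.neg_one_le_sin s; have := Real.pi_gt_three; linarith
    · exact Real.sin_le hs
  rcases le_total 0 t with h | h
  · exact key t h
  · have := key (-t) (by linarith)
    rwa [Real.sin_neg, abs_neg, abs_neg] at this

lemma abs_sin_sub_sin (a b : ℝ) : |Real.sin a - Real.sin b| ≤ |a - b| := by
  rw [Real.sin_sub_sin]
  calc |2 * Real.sin ((a - b) / 2) * Real.cos ((a + b) / 2)|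
      = 2 * |Real.sin ((a - b) / 2)| * |Real.cos ((a + b) / 2)| := by
        rw [abs_mul, abs_mul]; norm_num
    _ ≤ 2 * |(a - b) / 2| * 1 := by
        apply mul_le_mul (by
          apply mul_le_mul_of_nonneg_left (abs_sin_le_abs _) (by norm_num))
          (Real.abs_cos_le_one _) (abs_nonneg _) (by positivity)
    _ = |a - b| := by rw [abs_div]; norm_num; ring

lemma abs_cos_sub_cos (a b : ℝ) : |Real.cos a - Real.cos b| ≤ |a - b| := by
  rw [Real.cos_sub_cos]
  calc |-2 * Real.sin ((a + b) / 2) * Real.sin ((a - b) / 2)|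
      = 2 * |Real.sin ((a + b) / 2)| * |Real.sin ((a - b) / 2)| := by
        rw [abs_mul, abs_mul, abs_neg]; norm_num
    _ ≤ 2 * 1 * |(a - b) / 2| := by
        apply mul_le_mul (by
          apply mul_le_mul_of_nonneg_left (Real.abs_sin_le_one _) (by norm_num))
          (abs_sin_le_abs _) (abs_nonneg _) (by positivity)
    _ = |a - b| := by rw [abs_div]; norm_num; ring

lemma abs_mul_sub_mul {s1 c1 s2 c2 d1 d2 : ℝ} (hs : |s1 - s2| ≤ d1) (hc : |c1 - c2| ≤ d2)
    (hs1 : |s1| ≤ 1) (hc2 : |c2| ≤ 1) : |s1 * c1 - s2 * c2| ≤ d1 + d2 := by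
  have : s1 * c1 - s2 * c2 = s1 * (c1 - c2) + (s1 - s2) * c2 := by ring
  rw [this]
  calc |s1 * (c1 - c2) + (s1 - s2) * c2| ≤ |s1 * (c1 - c2)| + |(s1 - s2) * c2| := abs_add_le _ _
    _ = |s1| * |c1 - c2| + |s1 - s2| * |c2| := by rw [abs_mul, abs_mul]
    _ ≤ 1 * d2 + d1 * 1 := by
        apply add_le_add
        · exact mul_le_mul hs1 hc (abs_nonneg _) zero_le_one
        · exact mul_le_mul hs hc2 (abs_nonneg _) (le_trans (abs_nonneg _) hs)
    _ = d1 + d2 := by ring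

lemma sqrt_diff_le {u v ρ : ℝ} (hρ : 0 < ρ) (hu : ρ^2/4 ≤ u) (hv : ρ^2/4 ≤ v) :
    |Real.sqrt u - Real.sqrt v| ≤ |u - v| / ρ := by
  have hu0 : (0:ℝ) ≤ u := le_trans (by positivity) hu
  have hv0 : (0:ℝ) ≤ v := le_trans (by positivity) hv
  have hsu : ρ/2 ≤ Real.sqrt u := by
    rw [show ρ/2 = Real.sqrt ((ρ/2)^2) from (Real.sqrt_sq (by positivity)).symm]
    exact Real.sqrt_le_sqrt (by nlinarith)
  have hsv : ρ/2 ≤ Real.sqrt v := by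
    rw [show ρ/2 = Real.sqrt ((ρ/2)^2) from (Real.sqrt_sq (by positivity)).symm]
    exact Real.sqrt_le_sqrt (by nlinarith)
  have hsum : ρ ≤ Real.sqrt u + Real.sqrt v := by linarith
  have hmul : |Real.sqrt u - Real.sqrt v| * (Real.sqrt u + Real.sqrt v) = |u - v| := by
    rw [← abs_of_nonneg (show (0:ℝ) ≤ Real.sqrt u + Real.sqrt v by linarith), ← abs_mul]
    congr 1
    have h1 := Real.sq_sqrt hu0
    have h2 := Real.sq_sqrt hv0
    nlinarith [Real.sqrt_nonneg u, Real.sqrt_nonneg v]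
  rw [le_div_iff₀ hρ, ← hmul]
  exact mul_le_mul_of_nonneg_left hsum (abs_nonneg _)

section Basis
variable (b3 : OrthonormalBasis (Fin 3) ℝ E3)

lemma inner_combo (c0 c1 c2 : ℝ) (i : Fin 3) :
    ⟪b3 i, c1 • b3 1 + c2 • b3 2 + c0 • b3 0⟫
      = if i = 1 then c1 else if i = 2 then c2 else c0 := by
  have hON := orthonormal_iff_ite.mp b3.orthonormal
  fin_cases i <;>
  · simp only [inner_add_right, real_inner_smul_right, hON]
    norm_num [Fin.ext_iff]

lemma repr3 (y : E3) :
    (⟪b3 1, y⟫) • b3 1 + (⟪b3 2, y⟫) • b3 2 + (⟪b3 0, y⟫) • b3 0 = y := by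
  have h := b3.sum_repr' y
  rw [Fin.sum_univ_three] at h
  conv_rhs => rw [← h]
  abel

lemma norm_coords (y : E3) :
    ‖y‖^2 = (⟪b3 0, y⟫)^2 + (⟪b3 1, y⟫)^2 + (⟪b3 2, y⟫)^2 := by
  have hn : ‖y‖ = ‖b3.repr y‖ := (b3.repr.norm_map y).symm
  rw [hn, EuclideanSpace.norm_eq]
  rw [Real.sq_sqrt (by positivity)]
  rw [Fin.sum_univ_three]
  simp [b3.repr_apply_apply, Real.norm_eq_abs, sq_abs]

end Basis


section Basis2
variable (b3 : OrthonormalBasis (Fin 3) ℝ E3)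

/-- The polar cap disk parametrization. -/
def capMap (b3 : OrthonormalBasis (Fin 3) ℝ E3) (ρ : ℝ) : (Fin 2 → ℝ) → E3 :=
  fun p => p 0 • b3 1 + p 1 • b3 2 + Real.sqrt (ρ^2 - (p 0^2 + p 1^2)) • b3 0

/-- The spherical coordinate parametrization. -/
def sphMap (b3 : OrthonormalBasis (Fin 3) ℝ E3) (ρ : ℝ) : (Fin 2 → ℝ) → E3 :=
  fun q => (ρ * Real.sin (q 0) * Real.cos (q 1)) • b3 1
    + (ρ * Real.sin (q 0) * Real.sin (q 1)) • b3 2 + (ρ * Real.cos (q 0)) • b3 0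

lemma capMap_continuous (ρ : ℝ) : Continuous (capMap b3 ρ) := by
  unfold capMap; fun_prop

lemma sphMap_continuous (ρ : ℝ) : Continuous (sphMap b3 ρ) := by
  unfold sphMap; fun_prop

lemma norm_unit (i : Fin 3) : ‖b3 i‖ = 1 := b3.orthonormal.1 i

lemma capMap_lip {ρ : ℝ} (hρ : 0 < ρ) :
    LipschitzOnWith 4 (capMap b3 ρ) {p : Fin 2 → ℝ | p 0^2 + p 1^2 ≤ ρ^2/4} := by
  rw [lipschitzOnWith_iff_dist_le_mul]
  intro p hp q hq
  simp only [Set.mem_setOf_eq] at hp hq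
  have hd0 : |p 0 - q 0| ≤ dist p q := by
    rw [← Real.dist_eq]; exact dist_le_pi_dist p q 0
  have hd1 : |p 1 - q 1| ≤ dist p q := by
    rw [← Real.dist_eq]; exact dist_le_pi_dist p q 1
  have hdnn : 0 ≤ dist p q := dist_nonneg
  have hdiff : capMap b3 ρ p - capMap b3 ρ q
      = (p 0 - q 0) • b3 1 + (p 1 - q 1) • b3 2
        + (Real.sqrt (ρ^2 - (p 0^2 + p 1^2)) - Real.sqrt (ρ^2 - (q 0^2 + q 1^2))) • b3 0 := by
    unfold capMap
    rw [sub_smul, sub_smul, sub_smul]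
    abel
  rw [dist_eq_norm, hdiff]
  -- bound the sqrt difference
  have hsq : |Real.sqrt (ρ^2 - (p 0^2 + p 1^2)) - Real.sqrt (ρ^2 - (q 0^2 + q 1^2))|
      ≤ |((ρ^2 - (p 0^2 + p 1^2)) - (ρ^2 - (q 0^2 + q 1^2)))| / ρ :=
    sqrt_diff_le hρ (by nlinarith) (by nlinarith)
  have hp0 : |p 0| ≤ ρ/2 := by
    rw [abs_le]; constructor <;> nlinarith [sq_nonneg (p 1)]
  have hp1 : |p 1| ≤ ρ/2 := by
    rw [abs_le]; constructor <;> nlinarith [sq_nonneg (p 0)]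
  have hq0 : |q 0| ≤ ρ/2 := by
    rw [abs_le]; constructor <;> nlinarith [sq_nonneg (q 1)]
  have hq1 : |q 1| ≤ ρ/2 := by
    rw [abs_le]; constructor <;> nlinarith [sq_nonneg (q 0)]
  have habs : |((ρ^2 - (p 0^2 + p 1^2)) - (ρ^2 - (q 0^2 + q 1^2)))| ≤ 2 * ρ * dist p q := by
    have h1 : (ρ^2 - (p 0^2 + p 1^2)) - (ρ^2 - (q 0^2 + q 1^2))
        = (q 0 - p 0) * (q 0 + p 0) + (q 1 - p 1) * (q 1 + p 1) := by ring
    rw [h1]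
    calc |(q 0 - p 0) * (q 0 + p 0) + (q 1 - p 1) * (q 1 + p 1)|
        ≤ |(q 0 - p 0) * (q 0 + p 0)| + |(q 1 - p 1) * (q 1 + p 1)| := abs_add_le _ _
      _ = |q 0 - p 0| * |q 0 + p 0| + |q 1 - p 1| * |q 1 + p 1| := by rw [abs_mul, abs_mul]
      _ ≤ dist p q * ρ + dist p q * ρ := by
          apply add_le_add
          · apply mul_le_mul _ _ (abs_nonneg _) hdnn
            · rwa [abs_sub_comm] at hd0
            · calc |q 0 + p 0| ≤ |q 0| + |p 0| := abs_add_le _ _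
                _ ≤ ρ := by linarith
          · apply mul_le_mul _ _ (abs_nonneg _) hdnn
            · rwa [abs_sub_comm] at hd1
            · calc |q 1 + p 1| ≤ |q 1| + |p 1| := abs_add_le _ _
                _ ≤ ρ := by linarith
      _ = 2 * ρ * dist p q := by ring
  have hsq2 : |Real.sqrt (ρ^2 - (p 0^2 + p 1^2)) - Real.sqrt (ρ^2 - (q 0^2 + q 1^2))|
      ≤ 2 * dist p q := by
    calc _ ≤ |((ρ^2 - (p 0^2 + p 1^2)) - (ρ^2 - (q 0^2 + q 1^2)))| / ρ := hsq
      _ ≤ (2 * ρ * dist p q) / ρ := by gcongr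
      _ = 2 * dist p q := by field_simp
  calc ‖(p 0 - q 0) • b3 1 + (p 1 - q 1) • b3 2
        + (Real.sqrt (ρ^2 - (p 0^2 + p 1^2)) - Real.sqrt (ρ^2 - (q 0^2 + q 1^2))) • b3 0‖
      ≤ ‖(p 0 - q 0) • b3 1‖ + ‖(p 1 - q 1) • b3 2‖
        + ‖(Real.sqrt (ρ^2 - (p 0^2 + p 1^2)) - Real.sqrt (ρ^2 - (q 0^2 + q 1^2))) • b3 0‖ :=
        norm_add₃_le
    _ = |p 0 - q 0| + |p 1 - q 1|
        + |Real.sqrt (ρ^2 - (p 0^2 + p 1^2)) - Real.sqrt (ρ^2 - (q 0^2 + q 1^2))| := by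
        rw [norm_smul, norm_smul, norm_smul, norm_unit, norm_unit, norm_unit]
        simp [Real.norm_eq_abs]
    _ ≤ dist p q + dist p q + 2 * dist p q := by
        apply add_le_add (add_le_add hd0 hd1) hsq2
    _ ≤ 4 * dist p q := by push_cast; linarith

end Basis2

section Basis3
variable (b3 : OrthonormalBasis (Fin 3) ℝ E3)

lemma sphMap_lip {ρ : ℝ} (hρ : 0 < ρ) :
    LipschitzWith (Real.toNNReal (5*ρ)) (sphMap b3 ρ) := by
  rw [lipschitzWith_iff_dist_le_mul]
  intro p q
  have hd0 : |p 0 - q 0| ≤ dist p q := by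
    rw [← Real.dist_eq]; exact dist_le_pi_dist p q 0
  have hd1 : |p 1 - q 1| ≤ dist p q := by
    rw [← Real.dist_eq]; exact dist_le_pi_dist p q 1
  have hdnn : 0 ≤ dist p q := dist_nonneg
  have hdiff : sphMap b3 ρ p - sphMap b3 ρ q
      = (ρ * Real.sin (p 0) * Real.cos (p 1) - ρ * Real.sin (q 0) * Real.cos (q 1)) • b3 1
        + (ρ * Real.sin (p 0) * Real.sin (p 1) - ρ * Real.sin (q 0) * Real.sin (q 1)) • b3 2
        + (ρ * Real.cos (p 0) - ρ * Real.cos (q 0)) • b3 0 := by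
    unfold sphMap
    rw [sub_smul, sub_smul, sub_smul]
    abel
  have h1 : |Real.sin (p 0) * Real.cos (p 1) - Real.sin (q 0) * Real.cos (q 1)|
      ≤ dist p q + dist p q := by
    apply abs_mul_sub_mul ((abs_sin_sub_sin _ _).trans hd0)
      ((abs_cos_sub_cos _ _).trans hd1) (Real.abs_sin_le_one _) (Real.abs_cos_le_one _)
  have h2 : |Real.sin (p 0) * Real.sin (p 1) - Real.sin (q 0) * Real.sin (q 1)|
      ≤ dist p q + dist p q := by
    apply abs_mul_sub_mul ((abs_sin_sub_sin _ _).trans hd0)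
      ((abs_sin_sub_sin _ _).trans hd1) (Real.abs_sin_le_one _) (Real.abs_sin_le_one _)
  have h0 : |Real.cos (p 0) - Real.cos (q 0)| ≤ dist p q :=
    (abs_cos_sub_cos _ _).trans hd0
  rw [dist_eq_norm, hdiff]
  have key : ‖(ρ * Real.sin (p 0) * Real.cos (p 1) - ρ * Real.sin (q 0) * Real.cos (q 1)) • b3 1
        + (ρ * Real.sin (p 0) * Real.sin (p 1) - ρ * Real.sin (q 0) * Real.sin (q 1)) • b3 2
        + (ρ * Real.cos (p 0) - ρ * Real.cos (q 0)) • b3 0‖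
      ≤ ρ * (dist p q + dist p q) + ρ * (dist p q + dist p q) + ρ * dist p q := by
    calc _ ≤ ‖(ρ * Real.sin (p 0) * Real.cos (p 1) - ρ * Real.sin (q 0) * Real.cos (q 1)) • b3 1‖
        + ‖(ρ * Real.sin (p 0) * Real.sin (p 1) - ρ * Real.sin (q 0) * Real.sin (q 1)) • b3 2‖
        + ‖(ρ * Real.cos (p 0) - ρ * Real.cos (q 0)) • b3 0‖ := norm_add₃_le
      _ = |ρ * Real.sin (p 0) * Real.cos (p 1) - ρ * Real.sin (q 0) * Real.cos (q 1)|
        + |ρ * Real.sin (p 0) * Real.sin (p 1) - ρ * Real.sin (q 0) * Real.sin (q 1)|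
        + |ρ * Real.cos (p 0) - ρ * Real.cos (q 0)| := by
          rw [norm_smul, norm_smul, norm_smul, norm_unit, norm_unit, norm_unit]
          simp [Real.norm_eq_abs]
      _ ≤ ρ * (dist p q + dist p q) + ρ * (dist p q + dist p q) + ρ * dist p q := by
          apply add_le_add (add_le_add ?_ ?_) ?_
          · rw [show ρ * Real.sin (p 0) * Real.cos (p 1) - ρ * Real.sin (q 0) * Real.cos (q 1)
              = ρ * (Real.sin (p 0) * Real.cos (p 1) - Real.sin (q 0) * Real.cos (q 1)) by ring,
              abs_mul, abs_of_pos hρ]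
            exact mul_le_mul_of_nonneg_left h1 hρ.le
          · rw [show ρ * Real.sin (p 0) * Real.sin (p 1) - ρ * Real.sin (q 0) * Real.sin (q 1)
              = ρ * (Real.sin (p 0) * Real.sin (p 1) - Real.sin (q 0) * Real.sin (q 1)) by ring,
              abs_mul, abs_of_pos hρ]
            exact mul_le_mul_of_nonneg_left h2 hρ.le
          · rw [show ρ * Real.cos (p 0) - ρ * Real.cos (q 0)
              = ρ * (Real.cos (p 0) - Real.cos (q 0)) by ring, abs_mul, abs_of_pos hρ]
            exact mul_le_mul_of_nonneg_left h0 hρ.le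
  refine key.trans ?_
  rw [Real.coe_toNNReal _ (by positivity)]
  nlinarith [hdnn, hρ.le]

lemma cap_surj {x : E3} {a ρ : ℝ} (ha : 0 < a) (hρ : 0 < ρ) (hx : x = a • b3 0) :
    (Metric.sphere (0:E3) ρ ∩ {y : E3 | Real.sqrt 3 / 2 * (a * ρ) ≤ ⟪x, y⟫})
      ⊆ capMap b3 ρ '' {p : Fin 2 → ℝ | p 0^2 + p 1^2 ≤ ρ^2/4} := by
  rintro y ⟨hyS, hyA⟩
  rw [Set.mem_setOf_eq] at hyA
  have hyρ : ‖y‖ = ρ := by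
    rwa [mem_sphere_zero_iff_norm] at hyS
  set c0 := ⟪b3 0, y⟫ with hc0
  set c1 := ⟪b3 1, y⟫ with hc1
  set c2 := ⟪b3 2, y⟫ with hc2
  have hsum : ρ^2 = c0^2 + c1^2 + c2^2 := by
    rw [← hyρ]; exact norm_coords b3 y
  have hxy : ⟪x, y⟫ = a * c0 := by
    rw [hx, real_inner_smul_left]
  have hc0pos : Real.sqrt 3 / 2 * ρ ≤ c0 := by
    rw [hxy] at hyA
    have := Real.sqrt_nonneg 3
    nlinarith
  have hs3 : Real.sqrt 3 ^ 2 = 3 := Real.sq_sqrt (by norm_num)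
  have hc0sq : 3 / 4 * ρ^2 ≤ c0^2 := by
    have h0 : 0 ≤ Real.sqrt 3 / 2 * ρ := by positivity
    nlinarith
  refine ⟨![c1, c2], ?_, ?_⟩
  · rw [Set.mem_setOf_eq]
    simp only [Matrix.cons_val_zero, Matrix.cons_val_one, Matrix.head_cons]
    nlinarith
  · unfold capMap
    simp only [Matrix.cons_val_zero, Matrix.cons_val_one, Matrix.head_cons]
    have hc0nn : 0 ≤ c0 := le_trans (by positivity) hc0pos
    have : ρ^2 - (c1^2 + c2^2) = c0^2 := by linarith
    rw [this, Real.sqrt_sq hc0nn]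
    exact repr3 b3 y

lemma sph_surj {ρ : ℝ} (hρ : 0 < ρ) :
    Metric.sphere (0:E3) ρ
      ⊆ sphMap b3 ρ '' (Set.univ.pi fun _ : Fin 2 => Set.Icc (-π) π) := by
  intro y hyS
  have hyρ : ‖y‖ = ρ := by rwa [mem_sphere_zero_iff_norm] at hyS
  set c0 := ⟪b3 0, y⟫ with hc0
  set c1 := ⟪b3 1, y⟫ with hc1
  set c2 := ⟪b3 2, y⟫ with hc2
  have hsum : ρ^2 = c0^2 + c1^2 + c2^2 := by
    rw [← hyρ]; exact norm_coords b3 y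
  have hc0le : |c0 / ρ| ≤ 1 := by
    rw [abs_div, abs_of_pos hρ, div_le_one hρ]
    rw [show ρ = Real.sqrt (ρ^2) from (Real.sqrt_sq hρ.le).symm,
      show |c0| = Real.sqrt (c0^2) from (Real.sqrt_sq_eq_abs c0).symm]
    exact Real.sqrt_le_sqrt (by nlinarith)
  set θ := Real.arccos (c0 / ρ) with hθ
  have hcosθ : Real.cos θ = c0 / ρ :=
    Real.cos_arccos (abs_le.mp hc0le).1 (abs_le.mp hc0le).2
  have hρcos : ρ * Real.cos θ = c0 := by
    rw [hcosθ]; field_simp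
  have hsinθ : Real.sin θ = Real.sqrt (1 - (c0/ρ)^2) := by
    rw [hθ, Real.sin_arccos]
  have hρsin : ρ * Real.sin θ = Real.sqrt (ρ^2 - c0^2) := by
    rw [hsinθ, show ρ * Real.sqrt (1 - (c0/ρ)^2) = Real.sqrt (ρ^2) * Real.sqrt (1 - (c0/ρ)^2) by
      rw [Real.sqrt_sq hρ.le], ← Real.sqrt_mul (by positivity)]
    congr 1
    field_simp
  set z : ℂ := ⟨c1, c2⟩ with hz
  have hzabs : ‖z‖ = Real.sqrt (ρ^2 - c0^2) := by
    rw [Complex.norm_def, Complex.normSq_mk]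
    congr 1
    nlinarith
  set φ := Complex.arg z with hφ
  have hre : ρ * Real.sin θ * Real.cos φ = c1 := by
    rw [hρsin, ← hzabs, hφ, Complex.norm_mul_cos_arg]
  have him : ρ * Real.sin θ * Real.sin φ = c2 := by
    rw [hρsin, ← hzabs, hφ, Complex.norm_mul_sin_arg]
  refine ⟨![θ, φ], ?_, ?_⟩
  · rw [Set.mem_pi]
    intro i _
    fin_cases i <;> simp only [Matrix.cons_val_zero, Matrix.cons_val_one, Matrix.head_cons]
    · exact ⟨le_trans (by linarith [Real.pi_pos]) (Real.arccos_nonneg _), Real.arccos_le_pi _⟩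
    · exact ⟨(Complex.neg_pi_lt_arg z).le, Complex.arg_le_pi z⟩
  · unfold sphMap
    simp only [Matrix.cons_val_zero, Matrix.cons_val_one, Matrix.head_cons]
    rw [hre, him, hρcos]
    exact repr3 b3 y

end Basis3

lemma exists_onb (x : E3) (hx : x ≠ 0) :
    ∃ b3 : OrthonormalBasis (Fin 3) ℝ E3, b3 0 = ‖x‖⁻¹ • x := by
  have hcard : Module.finrank ℝ E3 = Fintype.card (Fin 3) := by simp
  have hnorm : ‖(‖x‖⁻¹ • x : E3)‖ = 1 := norm_smul_inv_norm hx
  have horth : Orthonormal ℝ (({0} : Set (Fin 3)).restrict fun _ : Fin 3 => (‖x‖⁻¹ • x : E3)) := by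
    rw [orthonormal_iff_ite]
    rintro ⟨i, hi⟩ ⟨j, hj⟩
    simp only [Set.mem_singleton_iff] at hi hj
    subst hi; subst hj
    have hij : (⟨0, Set.mem_singleton 0⟩ : ({0} : Set (Fin 3))) = ⟨0, Set.mem_singleton 0⟩ := rfl
    rw [if_pos (Subtype.ext rfl)]
    show ⟪(‖x‖⁻¹ • x : E3), (‖x‖⁻¹ • x : E3)⟫ = 1
    rw [real_inner_self_eq_norm_sq, hnorm]
    norm_num
  obtain ⟨b3, hb⟩ := horth.exists_orthonormalBasis_extension_of_card_eq hcard
  exact ⟨b3, hb 0 rfl⟩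

lemma pointwise_bound {x y : E3} {a ρ : ℝ} (ha : 0 < a) (hρ : 0 < ρ) (hρa : ρ < a)
    (hxa : ‖x‖ = a) (hyρ : ‖y‖ = ρ) :
    Real.exp (-‖x - y‖ - ‖y‖) * Real.sin (angle x y) ^ 2
      ≤ 2 * Real.exp (-a) * (Real.exp (-(ρ * (1 - ⟪x, y⟫ / (a * ρ)))) * (1 - ⟪x, y⟫ / (a * ρ))) := by
  set s := ⟪x, y⟫ / (a * ρ) with hs
  have haρ : 0 < a * ρ := mul_pos ha hρ
  have hinner : ⟪x, y⟫ = a * ρ * s := by rw [hs]; field_simp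
  have hCS : |⟪x, y⟫| ≤ a * ρ := by
    calc |⟪x, y⟫| ≤ ‖x‖ * ‖y‖ := abs_real_inner_le_norm x y
      _ = a * ρ := by rw [hxa, hyρ]
  have hs1 : |s| ≤ 1 := by
    rw [hs, abs_div, abs_of_pos haρ, div_le_one haρ]; exact hCS
  obtain ⟨hsm1, hsle1⟩ := abs_le.mp hs1
  have hsin : Real.sin (angle x y) ^ 2 = 1 - s ^ 2 := by
    have h1 := Real.sin_sq_add_cos_sq (angle x y)
    rw [cos_angle, hxa, hyρ] at h1
    rw [← hs] at h1
    linarith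
  set r := ‖x - y‖ with hr
  have hr0 : (0:ℝ) ≤ r := norm_nonneg _
  have hr2 : r ^ 2 = a ^ 2 + ρ ^ 2 - 2 * (a * ρ * s) := by
    rw [hr, norm_sub_sq_real, hxa, hyρ, hinner]; ring
  have hq0 : 0 ≤ (a - ρ) + ρ * (1 - s) := by nlinarith
  have hrge : (a - ρ) + ρ * (1 - s) ≤ r := by
    have hsq : ((a - ρ) + ρ * (1 - s)) ^ 2 ≤ r ^ 2 := by nlinarith
    have := Real.sqrt_le_sqrt hsq
    rwa [Real.sqrt_sq hq0, Real.sqrt_sq hr0] at this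
  have he : Real.exp (-r - ρ) ≤ Real.exp (-a) * Real.exp (-(ρ * (1 - s))) := by
    rw [← Real.exp_add]
    apply Real.exp_le_exp.mpr
    linarith
  have hfac : 1 - s ^ 2 ≤ 2 * (1 - s) := by nlinarith
  rw [hyρ, hsin]
  calc Real.exp (-r - ρ) * (1 - s ^ 2)
      ≤ (Real.exp (-a) * Real.exp (-(ρ * (1 - s)))) * (2 * (1 - s)) := by
        apply mul_le_mul he hfac (by nlinarith) (by positivity)
    _ = 2 * Real.exp (-a) * (Real.exp (-(ρ * (1 - s))) * (1 - s)) := by ring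

lemma gre_bound {x y : E3} {a ρ : ℝ} (ha : 0 < a) (hρ : 0 < ρ)
    (hxa : ‖x‖ = a) (hyρ : ‖y‖ = ρ) (hyA : ⟪x, y⟫ ≤ Real.sqrt 3 / 2 * (a * ρ)) :
    2 * Real.exp (-a) * (Real.exp (-(ρ * (1 - ⟪x, y⟫ / (a * ρ)))) * (1 - ⟪x, y⟫ / (a * ρ)))
      ≤ 4 * Real.exp (-a) * Real.exp (-(ρ / 8)) := by
  set s := ⟪x, y⟫ / (a * ρ) with hs
  have haρ : 0 < a * ρ := mul_pos ha hρ
  have hCS : |⟪x, y⟫| ≤ a * ρ := by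
    calc |⟪x, y⟫| ≤ ‖x‖ * ‖y‖ := abs_real_inner_le_norm x y
      _ = a * ρ := by rw [hxa, hyρ]
  have hs1 : |s| ≤ 1 := by
    rw [hs, abs_div, abs_of_pos haρ, div_le_one haρ]; exact hCS
  obtain ⟨hsm1, hsle1⟩ := abs_le.mp hs1
  have h74 : Real.sqrt 3 ≤ 7 / 4 := by
    rw [show (7:ℝ) / 4 = Real.sqrt ((7 / 4) ^ 2) from (Real.sqrt_sq (by norm_num)).symm]
    exact Real.sqrt_le_sqrt (by norm_num)
  have hsle : s ≤ 7 / 8 := by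
    rw [hs, div_le_iff₀ haρ]
    calc ⟪x, y⟫ ≤ Real.sqrt 3 / 2 * (a * ρ) := hyA
      _ ≤ 7 / 8 * (a * ρ) := by nlinarith
  have hexp : Real.exp (-(ρ * (1 - s))) ≤ Real.exp (-(ρ / 8)) := by
    apply Real.exp_le_exp.mpr
    nlinarith
  calc 2 * Real.exp (-a) * (Real.exp (-(ρ * (1 - s))) * (1 - s))
      ≤ 2 * Real.exp (-a) * (Real.exp (-(ρ / 8)) * 2) := by
        apply mul_le_mul_of_nonneg_left _ (by positivity)
        apply mul_le_mul hexp (by linarith) (by linarith) (by positivity)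
    _ = 4 * Real.exp (-a) * Real.exp (-(ρ / 8)) := by ring

lemma rho_exp {ρ : ℝ} (hρ : 0 < ρ) : ρ ^ 2 * Real.exp (-(ρ / 8)) ≤ 256 := by
  have h1 : ρ / 16 + 1 ≤ Real.exp (ρ / 16) := Real.add_one_le_exp _
  have h2 : ρ ^ 2 / 256 ≤ Real.exp (ρ / 8) := by
    have hK : Real.exp (ρ / 8) = Real.exp (ρ / 16) ^ 2 := by
      rw [sq, ← Real.exp_add]; ring_nf
    rw [hK]; nlinarith
  have hE := Real.exp_pos (ρ / 8)
  rw [Real.exp_neg]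
  have hstep : ρ ^ 2 ≤ 256 * Real.exp (ρ / 8) := by nlinarith
  calc ρ ^ 2 * (Real.exp (ρ / 8))⁻¹ ≤ (256 * Real.exp (ρ / 8)) * (Real.exp (ρ / 8))⁻¹ :=
      mul_le_mul_of_nonneg_right hstep (inv_nonneg.mpr hE.le)
    _ = 256 := by
      rw [mul_assoc, mul_inv_cancel₀ hE.ne', mul_one]

end Stmt15Aux

open Stmt15Aux in
theorem stmt15 :
    ∃ C > (0 : ℝ), ∀ (x : EuclideanSpace ℝ (Fin 3)) (ρ : ℝ), x ≠ 0 →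
      1 < ρ → ρ ≤ 2 * ‖x‖ / 3 →
      (∫ y in Metric.sphere (0 : EuclideanSpace ℝ (Fin 3)) ρ,
          Real.exp (-‖x - y‖ - ‖y‖) * Real.sin (angle x y) ^ 2 ∂(μH[2])) ≤
        C * Real.exp (-‖x‖) := by
  refine ⟨2000000, by norm_num, ?_⟩
  intro x ρ hx hρ1 hρ2
  set a := ‖x‖ with ha
  have ha0 : 0 < a := norm_pos_iff.mpr hx
  have hρ0 : (0:ℝ) < ρ := by linarith
  have h32 : 3 * ρ ≤ 2 * a := by linarith
  have hρa : ρ < a := by linarith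
  obtain ⟨b3, hb30⟩ := exists_onb x hx
  have hxb : x = a • b3 0 := by
    rw [hb30, smul_smul, mul_inv_cancel₀ ha0.ne', one_smul]
  set S := Metric.sphere (0 : E3) ρ with hSdef
  set f : E3 → ℝ := fun y => Real.exp (-‖x - y‖ - ‖y‖) * Real.sin (angle x y) ^ 2 with hf
  have hinnerc : Continuous fun y : E3 => ⟪x, y⟫ := Continuous.inner continuous_const continuous_id
  have hfm : Measurable f := by
    have hfeq : f = fun y => Real.exp (-‖x - y‖ - ‖y‖) * (1 - (⟪x, y⟫ / (‖x‖ * ‖y‖)) ^ 2) := by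
      funext y
      rw [hf]
      simp only
      congr 1
      have h1 := Real.sin_sq_add_cos_sq (angle x y)
      rw [cos_angle] at h1
      linarith
    rw [hfeq]
    apply Measurable.mul
    · apply Measurable.exp
      apply Measurable.sub
      · exact (continuous_const.sub continuous_id).norm.neg.measurable
      · exact continuous_norm.measurable
    · apply Measurable.sub measurable_const
      apply Measurable.pow_const
      exact hinnerc.measurable.div (continuous_const.mul continuous_norm).measurable
  have hfnn : ∀ y, 0 ≤ f y := fun y => mul_nonneg (Real.exp_pos _).le (sq_nonneg _)
  rw [MeasureTheory.integral_eq_lintegral_of_nonneg_ae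
    (Filter.Eventually.of_forall hfnn) hfm.aestronglyMeasurable]
  apply ENNReal.toReal_le_of_le_ofReal (by positivity)
  set F : E3 → ℝ≥0∞ := fun y => ENNReal.ofReal (f y) with hF
  set A1 := {y : E3 | Real.sqrt 3 / 2 * (a * ρ) ≤ ⟪x, y⟫} with hA1
  set A2 := {y : E3 | ⟪x, y⟫ ≤ Real.sqrt 3 / 2 * (a * ρ)} with hA2
  have hSmeas : MeasurableSet S := Metric.isClosed_sphere.measurableSet
  have hA1m : MeasurableSet A1 := (isClosed_le continuous_const hinnerc).measurableSet
  have hA2m : MeasurableSet A2 := (isClosed_le hinnerc continuous_const).measurableSet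
  have hsplit : (∫⁻ y in S, F y ∂μH[2])
      ≤ (∫⁻ y in S ∩ A1, F y ∂μH[2]) + ∫⁻ y in S ∩ A2, F y ∂μH[2] := by
    have hsub : S ⊆ (S ∩ A1) ∪ (S ∩ A2) := by
      intro y hy
      rcases le_total (⟪x, y⟫) (Real.sqrt 3 / 2 * (a * ρ)) with h | h
      · exact Or.inr ⟨hy, h⟩
      · exact Or.inl ⟨hy, h⟩
    calc (∫⁻ y in S, F y ∂μH[2])
        ≤ ∫⁻ y, F y ∂((μH[2] : Measure E3).restrict ((S ∩ A1) ∪ (S ∩ A2))) :=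
          lintegral_mono' (Measure.restrict_mono hsub le_rfl) le_rfl
      _ ≤ ∫⁻ y, F y ∂((μH[2] : Measure E3).restrict (S ∩ A1)
            + (μH[2] : Measure E3).restrict (S ∩ A2)) :=
          lintegral_mono' (Measure.restrict_union_le _ _) le_rfl
      _ = _ := lintegral_add_measure _ _ _
  -- the comparison function
  set gre : E3 → ℝ := fun y =>
    2 * Real.exp (-a) * (Real.exp (-(ρ * (1 - ⟪x, y⟫ / (a * ρ)))) * (1 - ⟪x, y⟫ / (a * ρ)))
    with hgre
  have hgrec : Continuous gre := by
    have h1 : Continuous fun y : E3 => 1 - ⟪x, y⟫ / (a * ρ) :=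
      continuous_const.sub (hinnerc.div_const _)
    exact continuous_const.mul ((Real.continuous_exp.comp ((continuous_const.mul h1).neg)).mul h1)
  set G : E3 → ℝ≥0∞ := fun y => ENNReal.ofReal (gre y) with hG
  have hGm : Measurable G := hgrec.measurable.ennreal_ofReal
  have hFG : ∀ y ∈ S, F y ≤ G y := by
    intro y hy
    exact ENNReal.ofReal_le_ofReal
      (pointwise_bound ha0 hρ0 hρa rfl (mem_sphere_zero_iff_norm.mp hy))
  -- Region 1 : the cap
  set D := {p : Fin 2 → ℝ | p 0 ^ 2 + p 1 ^ 2 ≤ ρ ^ 2 / 4} with hD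
  have hDm : MeasurableSet D := by
    apply IsClosed.measurableSet
    apply isClosed_le _ continuous_const
    exact (((continuous_apply (0 : Fin 2)).pow 2).add ((continuous_apply (1 : Fin 2)).pow 2))
  have hcapm : Measurable (capMap b3 ρ) := (capMap_continuous b3 ρ).measurable
  have hcap := restrict_le_smul_map (capMap_lip b3 hρ0) hDm hcapm
    (cap_surj b3 ha0 hρ0 hxb)
  have h16 : ((4 : ℝ≥0) : ℝ≥0∞) ^ (2:ℝ) = 16 := by
    rw [show (2:ℝ) = ((2:ℕ):ℝ) by norm_num, ENNReal.rpow_natCast]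
    norm_num
  have hinncap : ∀ p : Fin 2 → ℝ,
      ⟪x, capMap b3 ρ p⟫ = a * Real.sqrt (ρ ^ 2 - (p 0 ^ 2 + p 1 ^ 2)) := by
    intro p
    rw [hxb, real_inner_smul_left]
    congr 1
    have := inner_combo b3 (Real.sqrt (ρ ^ 2 - (p 0 ^ 2 + p 1 ^ 2))) (p 0) (p 1) 0
    simpa [capMap] using this
  have hreg1 : (∫⁻ y in S ∩ A1, F y ∂μH[2]) ≤ ENNReal.ofReal (3072 * Real.exp (-a)) := by
    have step1 : (∫⁻ y in S ∩ A1, F y ∂μH[2]) ≤ ∫⁻ y in S ∩ A1, G y ∂μH[2] := by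
      apply lintegral_mono_ae
      filter_upwards [ae_restrict_mem (hSmeas.inter hA1m)] with y hy
      exact hFG y hy.1
    have step2 : (∫⁻ y in S ∩ A1, G y ∂μH[2])
        ≤ 16 * ∫⁻ p in D, G (capMap b3 ρ p) ∂volume := by
      calc (∫⁻ y in S ∩ A1, G y ∂μH[2])
          ≤ ∫⁻ y, G y ∂((((4:ℝ≥0) : ℝ≥0∞) ^ (2:ℝ)) •
              Measure.map (capMap b3 ρ) (volume.restrict D)) :=
            lintegral_mono' hcap le_rfl
        _ = (((4:ℝ≥0) : ℝ≥0∞) ^ (2:ℝ)) *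
              ∫⁻ y, G y ∂(Measure.map (capMap b3 ρ) (volume.restrict D)) :=
            lintegral_smul_measure _ _
        _ = 16 * ∫⁻ p in D, G (capMap b3 ρ p) ∂volume := by
            rw [h16, lintegral_map hGm hcapm]
    have step3 : (∫⁻ p in D, G (capMap b3 ρ p) ∂volume)
        ≤ ∫⁻ p in D, ENNReal.ofReal ((2 * Real.exp (-a) / ρ ^ 2) *
            ((p 0 ^ 2 + p 1 ^ 2) * Real.exp (-(2 * (4*ρ)⁻¹) * (p 0 ^ 2 + p 1 ^ 2)))) ∂volume := by
      apply lintegral_mono_ae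
      filter_upwards [ae_restrict_mem hDm] with p hp
      apply ENNReal.ofReal_le_ofReal
      rw [hgre]
      simp only
      have hp' : p 0 ^ 2 + p 1 ^ 2 ≤ ρ ^ 2 / 4 := hp
      set n := p 0 ^ 2 + p 1 ^ 2 with hn
      have hn0 : (0:ℝ) ≤ n := by positivity
      set c := Real.sqrt (ρ ^ 2 - n) with hc
      have hc0 : 0 ≤ c := Real.sqrt_nonneg _
      have hcsq : c ^ 2 = ρ ^ 2 - n := Real.sq_sqrt (by nlinarith)
      have hcle : c ≤ ρ := by
        have h := Real.sqrt_le_sqrt (show ρ ^ 2 - n ≤ ρ ^ 2 by linarith)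
        rwa [Real.sqrt_sq hρ0.le] at h
      have ht : ⟪x, capMap b3 ρ p⟫ / (a * ρ) = c / ρ := by
        rw [hinncap, ← hn, ← hc]
        exact mul_div_mul_left _ _ ha0.ne'
      rw [ht]
      have h1t : 1 - c / ρ = (ρ - c) / ρ := by field_simp
      have hrc1 : 2 * (4*ρ)⁻¹ * n ≤ ρ - c := by
        have h2ρ : 2 * (4*ρ)⁻¹ * n = n / (2*ρ) := by field_simp; ring
        rw [h2ρ, div_le_iff₀ (by positivity)]
        nlinarith
      have hρ1t : ρ * (1 - c / ρ) = ρ - c := by field_simp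
      have hexp2 : Real.exp (-(ρ * (1 - c / ρ))) ≤ Real.exp (-(2 * (4*ρ)⁻¹ * n)) := by
        apply Real.exp_le_exp.mpr
        rw [hρ1t]; linarith
      have hk2 : 1 - c / ρ ≤ n / ρ ^ 2 := by
        rw [h1t, div_le_div_iff₀ hρ0 (by positivity)]
        nlinarith [mul_nonneg (mul_nonneg (sub_nonneg.mpr hcle) hρ0.le) hc0, hcsq]
      have h1tnn : 0 ≤ 1 - c / ρ := by
        rw [h1t]; exact div_nonneg (by linarith) hρ0.le
      calc 2 * Real.exp (-a) * (Real.exp (-(ρ * (1 - c / ρ))) * (1 - c / ρ))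
          ≤ 2 * Real.exp (-a) * (Real.exp (-(2 * (4*ρ)⁻¹ * n)) * (n / ρ ^ 2)) := by
            apply mul_le_mul_of_nonneg_left _ (by positivity)
            exact mul_le_mul hexp2 hk2 h1tnn (Real.exp_pos _).le
        _ = (2 * Real.exp (-a) / ρ ^ 2) * (n * Real.exp (-(2 * (4*ρ)⁻¹) * n)) := by
            rw [show -(2 * (4*ρ)⁻¹ * n) = -(2 * (4*ρ)⁻¹) * n by ring]
            ring
    have step4 : (∫⁻ p in D, ENNReal.ofReal ((2 * Real.exp (-a) / ρ ^ 2) *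
            ((p 0 ^ 2 + p 1 ^ 2) * Real.exp (-(2 * (4*ρ)⁻¹) * (p 0 ^ 2 + p 1 ^ 2)))) ∂volume)
        ≤ ENNReal.ofReal (2 * Real.exp (-a) / ρ ^ 2) * ENNReal.ofReal (96 * ρ ^ 2) := by
      calc _ ≤ ∫⁻ p : Fin 2 → ℝ, ENNReal.ofReal ((2 * Real.exp (-a) / ρ ^ 2) *
            ((p 0 ^ 2 + p 1 ^ 2) * Real.exp (-(2 * (4*ρ)⁻¹) * (p 0 ^ 2 + p 1 ^ 2)))) ∂volume :=
            lintegral_mono' Measure.restrict_le_self le_rfl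
        _ = ∫⁻ p : Fin 2 → ℝ, ENNReal.ofReal (2 * Real.exp (-a) / ρ ^ 2) * ENNReal.ofReal
            ((p 0 ^ 2 + p 1 ^ 2) * Real.exp (-(2 * (4*ρ)⁻¹) * (p 0 ^ 2 + p 1 ^ 2))) ∂volume := by
            congr 1
            funext p
            rw [ENNReal.ofReal_mul (by positivity)]
        _ = ENNReal.ofReal (2 * Real.exp (-a) / ρ ^ 2) * ∫⁻ p : Fin 2 → ℝ, ENNReal.ofReal
            ((p 0 ^ 2 + p 1 ^ 2) * Real.exp (-(2 * (4*ρ)⁻¹) * (p 0 ^ 2 + p 1 ^ 2))) ∂volume :=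
            lintegral_const_mul' _ _ ENNReal.ofReal_ne_top
        _ ≤ _ := mul_le_mul' le_rfl (lint_2d hρ0)
    calc (∫⁻ y in S ∩ A1, F y ∂μH[2])
        ≤ ∫⁻ y in S ∩ A1, G y ∂μH[2] := step1
      _ ≤ 16 * ∫⁻ p in D, G (capMap b3 ρ p) ∂volume := step2
      _ ≤ 16 * (ENNReal.ofReal (2 * Real.exp (-a) / ρ ^ 2) * ENNReal.ofReal (96 * ρ ^ 2)) :=
          mul_le_mul' le_rfl (step3.trans step4)
      _ = ENNReal.ofReal (3072 * Real.exp (-a)) := by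
          rw [← ENNReal.ofReal_mul (by positivity),
            show (16:ℝ≥0∞) = ENNReal.ofReal (16:ℝ) by simp,
            ← ENNReal.ofReal_mul (by norm_num)]
          congr 1
          field_simp
          ring
  -- Region 2
  have hμS : (μH[2] : Measure E3) (S ∩ A2)
      ≤ ENNReal.ofReal (25 * ρ ^ 2) * ENNReal.ofReal (4 * π ^ 2) := by
    calc (μH[2] : Measure E3) (S ∩ A2)
        ≤ μH[2] S := measure_mono Set.inter_subset_left
      _ ≤ μH[2] (sphMap b3 ρ '' (Set.univ.pi fun _ : Fin 2 => Set.Icc (-π) π)) :=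
          measure_mono (sph_surj b3 hρ0)
      _ ≤ ((Real.toNNReal (5*ρ) : ℝ≥0∞)) ^ (2:ℝ) *
            μH[2] (Set.univ.pi fun _ : Fin 2 => Set.Icc (-π) π) :=
          (sphMap_lip b3 hρ0).hausdorffMeasure_image_le (by norm_num) _
      _ = ENNReal.ofReal (25 * ρ ^ 2) * ENNReal.ofReal (4 * π ^ 2) := by
          congr 1
          · rw [show ((Real.toNNReal (5*ρ)) : ℝ≥0∞) = ENNReal.ofReal (5*ρ) from rfl,
              ENNReal.ofReal_rpow_of_pos (by positivity)]
            congr 1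
            rw [show (2:ℝ) = ((2:ℕ):ℝ) by norm_num, Real.rpow_natCast]
            ring
          · rw [show ((2:ℝ)) = ((Fintype.card (Fin 2) : ℝ)) by simp, hausdorffMeasure_pi_real,
              volume_pi_pi]
            simp only [Real.volume_Icc]
            rw [Fin.prod_univ_two]
            rw [show π - -π = 2*π by ring, ← ENNReal.ofReal_mul (by positivity)]
            congr 1
            ring
  have hreg2 : (∫⁻ y in S ∩ A2, F y ∂μH[2]) ≤ ENNReal.ofReal (1024000 * Real.exp (-a)) := by
    have hconst : ∀ y ∈ S ∩ A2,
        F y ≤ ENNReal.ofReal (4 * Real.exp (-a) * Real.exp (-(ρ/8))) := by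
      rintro y ⟨hyS, hyA⟩
      refine le_trans (hFG y hyS) (ENNReal.ofReal_le_ofReal ?_)
      exact gre_bound ha0 hρ0 rfl (mem_sphere_zero_iff_norm.mp hyS) hyA
    calc (∫⁻ y in S ∩ A2, F y ∂μH[2])
        ≤ ∫⁻ _ in S ∩ A2, ENNReal.ofReal (4 * Real.exp (-a) * Real.exp (-(ρ/8))) ∂μH[2] := by
          apply lintegral_mono_ae
          filter_upwards [ae_restrict_mem (hSmeas.inter hA2m)] with y hy
          exact hconst y hy
      _ = ENNReal.ofReal (4 * Real.exp (-a) * Real.exp (-(ρ/8))) *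
            (μH[2] : Measure E3) (S ∩ A2) := setLIntegral_const _ _
      _ ≤ ENNReal.ofReal (4 * Real.exp (-a) * Real.exp (-(ρ/8))) *
            (ENNReal.ofReal (25 * ρ ^ 2) * ENNReal.ofReal (4 * π ^ 2)) :=
          mul_le_mul' le_rfl hμS
      _ = ENNReal.ofReal ((4 * Real.exp (-a) * Real.exp (-(ρ/8))) * (25 * ρ ^ 2) * (4 * π ^ 2)) := by
          rw [← ENNReal.ofReal_mul (by positivity), ← ENNReal.ofReal_mul (by positivity)]
          ring_nf
      _ ≤ ENNReal.ofReal (1024000 * Real.exp (-a)) := by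
          apply ENNReal.ofReal_le_ofReal
          have hre := rho_exp hρ0
          have hπ2 : π ^ 2 ≤ 10 := by nlinarith [Real.pi_lt_d2, Real.pi_pos]
          calc (4 * Real.exp (-a) * Real.exp (-(ρ/8))) * (25 * ρ ^ 2) * (4 * π ^ 2)
              = 400 * ((ρ ^ 2 * Real.exp (-(ρ/8))) * π ^ 2) * Real.exp (-a) := by ring
            _ ≤ 400 * (256 * 10) * Real.exp (-a) := by
                apply mul_le_mul_of_nonneg_right _ (Real.exp_pos _).le
                apply mul_le_mul_of_nonneg_left _ (by norm_num)
                exact mul_le_mul hre hπ2 (sq_nonneg π) (by norm_num)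
            _ ≤ 1024000 * Real.exp (-a) := by nlinarith [Real.exp_pos (-a)]
  refine hsplit.trans ?_
  refine (add_le_add hreg1 hreg2).trans ?_
  rw [← ENNReal.ofReal_add (by positivity) (by positivity)]
  apply ENNReal.ofReal_le_ofReal
  nlinarith [Real.exp_pos (-a)]
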